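/- In the cone-projection setup, the family (ν(g i))_{k ≤ (i:ℕ) < t} is linearly independent, and the image ν(G) of the open cone G under ν equals the open simplicial cone {Σ_{k ≤ (i:ℕ) < t} α_i • ν(g i) : all α_i > 0} on these projected vectors (interpreted as {0} when k = t). (This is the geometric content behind the fact, used in Lemma 3.9 and Lemma 3.10, that the projection ν_E maps cones of the fan around E to simplicial cones.) -/

import Mathlib

open RealInnerProductSpace

/-- Geometric content of Lemmas 3.9 and 3.10: the projections `ν(g i)` for
`k ≤ i < t` are linearly independent, and the image `ν(G)` of the open cone
`G` under the orthogonal projection `ν` is the open simplicial cone on these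
projected vectors. -/
theorem stmt12 (n t k : ℕ) (hk : k ≤ t)
    (g : Fin t → EuclideanSpace ℝ (Fin n))
    (hg : LinearIndependent ℝ g)
    (W : Submodule ℝ (EuclideanSpace ℝ (Fin n)))
    (hW : W = Submodule.span ℝ {v | ∃ i : Fin t, (i : ℕ) < k ∧ v = g i})
    (ν : EuclideanSpace ℝ (Fin n) → EuclideanSpace ℝ (Fin n))
    (hν : ∀ v, ν v = (Submodule.orthogonalProjectionOnto Wᗮ v : EuclideanSpace ℝ (Fin n)))
    (F G : Set (EuclideanSpace ℝ (Fin n)))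
    (hF : F = {x | ∃ α : Fin t → ℝ, (∀ i : Fin t, (i : ℕ) < k → 0 < α i) ∧
      x = ∑ i ∈ Finset.univ.filter (fun i : Fin t => (i : ℕ) < k), α i • g i})
    (hG : G = {x | ∃ α : Fin t → ℝ, (∀ i, 0 < α i) ∧ x = ∑ i, α i • g i}) :
    LinearIndependent ℝ (fun i : {i : Fin t // k ≤ (i : ℕ)} => ν (g i)) ∧
    ν '' G = {x | ∃ α : Fin t → ℝ, (∀ i : Fin t, k ≤ (i : ℕ) → 0 < α i) ∧
      x = ∑ i ∈ Finset.univ.filter (fun i : Fin t => k ≤ (i : ℕ)), α i • ν (g i)} := by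
  classical
  -- ν as a linear map
  set L : EuclideanSpace ℝ (Fin n) →ₗ[ℝ] EuclideanSpace ℝ (Fin n) :=
    Wᗮ.subtype ∘ₗ (Submodule.orthogonalProjectionOnto Wᗮ).toLinearMap with hL
  have hνL : ν = L := by funext v; simp [hν, hL]
  -- the set generating W is an image
  have hWset : {v | ∃ i : Fin t, (i : ℕ) < k ∧ v = g i} = g '' {i | (i : ℕ) < k} := by
    ext v; constructor
    · rintro ⟨i, hi, rfl⟩; exact ⟨i, hi, rfl⟩
    · rintro ⟨i, hi, rfl⟩; exact ⟨i, hi, rfl⟩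
  -- kernel of ν contains W
  have hkerW : ∀ v ∈ W, ν v = 0 := by
    intro v hv
    rw [hν]
    have : Submodule.orthogonalProjectionOnto Wᗮ v = 0 := by
      rw [Submodule.orthogonalProjectionOnto_eq_zero_iff, Submodule.orthogonal_orthogonal]
      exact hv
    simp [this]
  have hgzero : ∀ i : Fin t, (i : ℕ) < k → ν (g i) = 0 := fun i hi =>
    hkerW _ (hW ▸ Submodule.subset_span ⟨i, hi, rfl⟩)
  -- disjointness
  have hdisj : Disjoint (Submodule.span ℝ (g '' {i | k ≤ (i : ℕ)})) W := by
    rw [hW, hWset]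
    exact hg.disjoint_span_image (by simp [Set.disjoint_left])
  -- kernel of L is W
  have hkerL : LinearMap.ker L ≤ W := by
    intro v hv
    have : ν v = 0 := by rw [hνL]; exact hv
    rw [hν] at this
    have hv' : Submodule.orthogonalProjectionOnto Wᗮ v = 0 := by
      exact_mod_cast Subtype.ext this
    rw [Submodule.orthogonalProjectionOnto_eq_zero_iff, Submodule.orthogonal_orthogonal] at hv'
    exact hv'
  have hli : LinearIndependent ℝ (fun i : {i : Fin t // k ≤ (i : ℕ)} => ν (g i)) := by
    rw [hνL]
    have h1 : LinearIndependent ℝ (fun i : {i : Fin t // k ≤ (i : ℕ)} => g i) :=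
      hg.comp _ Subtype.val_injective
    refine h1.map (f := L) ?_
    have : Set.range (fun i : {i : Fin t // k ≤ (i : ℕ)} => g i) = g '' {i | k ≤ (i : ℕ)} := by
      ext v; simp [Set.range, Set.image]
    rw [this]
    exact Disjoint.mono_right hkerL hdisj
  refine ⟨hli, ?_⟩
  ext x
  constructor
  · rintro ⟨y, hy, rfl⟩
    rw [hG] at hy
    obtain ⟨α, hα, rfl⟩ := hy
    refine ⟨α, fun i _ => hα i, ?_⟩
    rw [hνL, map_sum]
    rw [← Finset.sum_filter_add_sum_filter_not Finset.univ (fun i : Fin t => k ≤ (i : ℕ))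
      (fun i => L (α i • g i))]
    have : ∀ i ∈ Finset.univ.filter (fun i : Fin t => ¬ k ≤ (i : ℕ)), L (α i • g i) = 0 := by
      intro i hi
      simp only [Finset.mem_filter, not_le] at hi
      have := hgzero i hi.2
      rw [hνL] at this
      simp [map_smul, this]
    rw [Finset.sum_eq_zero this, add_zero]
    exact Finset.sum_congr rfl (fun i _ => by rw [map_smul, ← hνL])
  · rintro ⟨α, hα, rfl⟩
    set β : Fin t → ℝ := fun i => if k ≤ (i : ℕ) then α i else 1 with hβ
    refine ⟨∑ i, β i • g i, ?_, ?_⟩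
    · rw [hG]
      exact ⟨β, fun i => by by_cases h : k ≤ (i : ℕ) <;> simp [hβ, h, hα i], rfl⟩
    · rw [hνL, map_sum]
      rw [← Finset.sum_filter_add_sum_filter_not Finset.univ (fun i : Fin t => k ≤ (i : ℕ))
        (fun i => L (β i • g i))]
      have h0 : ∀ i ∈ Finset.univ.filter (fun i : Fin t => ¬ k ≤ (i : ℕ)), L (β i • g i) = 0 := by
        intro i hi
        simp only [Finset.mem_filter, not_le] at hi
        have := hgzero i hi.2
        rw [hνL] at this
        simp [map_smul, this]
      rw [Finset.sum_eq_zero h0, add_zero]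
      refine Finset.sum_congr rfl (fun i hi => ?_)
      simp only [Finset.mem_filter] at hi
      rw [map_smul, ← hνL, hβ]
      simp [hi.2]
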